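/- Let G be a finite abelian group and G₀ ⊆ G a non-half-factorial subset satisfying the two conditions: (a) there is some g ∈ G₀ such that Δ(G₀ \ {g}) = ∅, and (b) there is some atom U ∈ A(G₀) with cross number k(U) = 1 and gcd(v_g(U), ord(g)) = 1. Then every atom A ∈ A(G₀) has cross number k(A) ∈ ℕ (a positive integer), and min Δ(G₀) divides k(A) − 1 for every atom A ∈ A(G₀). -/

import Mathlib

/- Common definitions for zero-sum theory over a finite abelian group. -/

variable {G : Type*} [AddCommGroup G]

/-- `S` is a zero-sum sequence over the subset `G₀`:
a finite multiset of elements of `G₀` whose sum is `0`. -/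
def IsZeroSumSeq (G₀ : Set G) (S : Multiset G) : Prop :=
  (∀ g ∈ S, g ∈ G₀) ∧ S.sum = 0

/-- `A` is an atom (minimal zero-sum sequence) over `G₀`: a nonempty zero-sum
sequence over `G₀` that cannot be written as the union of two nonempty
zero-sum sequences, i.e. has no proper nonempty zero-sum subsequence. -/
def IsAtomOver (G₀ : Set G) (A : Multiset G) : Prop :=
  IsZeroSumSeq G₀ A ∧ A ≠ 0 ∧
    ∀ B : Multiset G, B ≤ A → B ≠ 0 → B ≠ A → B.sum ≠ 0

/-- The set of lengths `L(B)` of a zero-sum sequence `B` over `G₀`: all `k`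
such that `B` is a union of `k` atoms over `G₀`. -/
def lengthSet (G₀ : Set G) (B : Multiset G) : Set ℕ :=
  { k | ∃ f : Multiset (Multiset G), f.card = k ∧ (∀ A ∈ f, IsAtomOver G₀ A) ∧ f.sum = B }

/-- The set of successive distances `Δ(L)` of a set `L ⊆ ℕ`. -/
def distSet (L : Set ℕ) : Set ℕ :=
  { d | ∃ a ∈ L, ∃ b ∈ L, a < b ∧ b - a = d ∧ ∀ c ∈ L, a < c → c < b → False }

/-- The set of distances `Δ(G₀)`: union of `Δ(L(B))` over all nonempty
zero-sum sequences `B` over `G₀`. -/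
def DeltaOf (G₀ : Set G) : Set ℕ :=
  ⋃ B : Multiset G, ⋃ (_ : B ≠ 0), distSet (lengthSet G₀ B)

/-- The set of minimal distances `Δ*(G) = { min Δ(G₀) : G₀ ⊆ G, Δ(G₀) ≠ ∅ }`. -/
def DeltaStar (G : Type*) [AddCommGroup G] : Set ℕ :=
  { d | ∃ G₀ : Set G, (DeltaOf G₀).Nonempty ∧ sInf (DeltaOf G₀) = d }

/-- The cross number `k(S) = Σ_{g ∈ S} 1/ord(g)` (with multiplicity). -/
noncomputable def crossNumber (S : Multiset G) : ℚ :=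
  (S.map fun g => ((addOrderOf g : ℚ))⁻¹).sum

/-- `G₀` is an LCN-set: every atom over `G₀` has cross number at least `1`. -/
def IsLCNSet (G₀ : Set G) : Prop :=
  ∀ A : Multiset G, IsAtomOver G₀ A → 1 ≤ crossNumber A

/-- `r` is the rank of the finite abelian group `G`: the number of summands
in the invariant factor decomposition `G ≅ C_{n₁} ⊕ ... ⊕ C_{n_r}` with
`1 < n₁ ∣ n₂ ∣ ... ∣ n_r`. -/
def IsRank (G : Type*) [AddCommGroup G] (r : ℕ) : Prop :=
  ∃ d : Fin r → ℕ, (∀ i, 1 < d i) ∧ (∀ i j, i ≤ j → d i ∣ d j) ∧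
    Nonempty (G ≃+ ((i : Fin r) → ZMod (d i)))

/-- The system of sets of lengths `𝓛(G) = { L(B) : B ∈ 𝓑(G) nonempty }`. -/
def LSystem (G : Type*) [AddCommGroup G] : Set (Set ℕ) :=
  { L | ∃ B : Multiset G, B ≠ 0 ∧ IsZeroSumSeq (Set.univ : Set G) B ∧
      lengthSet (Set.univ : Set G) B = L }

/-- `d` is the greatest common divisor of the set `S ⊆ ℕ`. -/
def IsSetGcd (S : Set ℕ) (d : ℕ) : Prop :=
  (∀ s ∈ S, d ∣ s) ∧ ∀ e : ℕ, (∀ s ∈ S, e ∣ s) → e ∣ d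

section Helpers
variable {G : Type*} [AddCommGroup G]

lemma crossNumber_add (S T : Multiset G) :
    crossNumber (S + T) = crossNumber S + crossNumber T := by
  simp [crossNumber]

lemma crossNumber_zero : crossNumber (0 : Multiset G) = 0 := by simp [crossNumber]

lemma crossNumber_nsmul (n : ℕ) (S : Multiset G) :
    crossNumber (n • S) = n * crossNumber S := by
  induction n with
  | zero => simp [crossNumber]
  | succ k ih => rw [succ_nsmul, crossNumber_add, ih]; push_cast; ring

lemma crossNumber_replicate (n : ℕ) (g : G) :
    crossNumber (Multiset.replicate n g) = n * ((addOrderOf g : ℚ))⁻¹ := by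
  simp [crossNumber, Multiset.map_replicate, Multiset.sum_replicate, nsmul_eq_mul]

lemma crossNumber_multiset_sum (f : Multiset (Multiset G)) :
    crossNumber f.sum = (f.map crossNumber).sum := by
  induction f using Multiset.induction_on with
  | empty => simp [crossNumber]
  | cons a s ih => simp [crossNumber_add, ih]

lemma crossNumber_pos [Fintype G] {S : Multiset G} (hS : S ≠ 0) :
    0 < crossNumber S := by
  obtain ⟨g, hg⟩ := Multiset.exists_mem_of_ne_zero hS
  obtain ⟨S', rfl⟩ := Multiset.exists_cons_of_mem hg
  have h1 : 0 < ((addOrderOf g : ℚ))⁻¹ := by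
    have : 0 < addOrderOf g := addOrderOf_pos g
    positivity
  have h2 : 0 ≤ crossNumber S' := by
    apply Multiset.sum_nonneg
    intro x hx
    simp only [Multiset.mem_map] at hx
    obtain ⟨h, _, rfl⟩ := hx
    positivity
  have : crossNumber (g ::ₘ S') = ((addOrderOf g : ℚ))⁻¹ + crossNumber S' := by
    simp [crossNumber]
  rw [this]; linarith

lemma sum_nsmul_multiset (n : ℕ) (S : Multiset G) : (n • S).sum = n • S.sum := by
  induction n with
  | zero => simp
  | succ k ih => rw [succ_nsmul, succ_nsmul, Multiset.sum_add, ih]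

set_option linter.unusedSectionVars false in
lemma nsmul_replicate' (n k : ℕ) (g : G) :
    n • Multiset.replicate k g = Multiset.replicate (n * k) g := by
  induction n with
  | zero => simp
  | succ m ih => rw [succ_nsmul, ih, Nat.succ_mul, Multiset.replicate_add]

end Helpers
section Helpers2
variable {G : Type*} [AddCommGroup G]

/-- An atom over a subset is an atom over the whole set. -/
lemma IsAtomOver.mono {G₀ G₁ : Set G} (h : G₀ ⊆ G₁) {A : Multiset G}
    (hA : IsAtomOver G₀ A) : IsAtomOver G₁ A :=
  ⟨⟨fun g hg => h (hA.1.1 g hg), hA.1.2⟩, hA.2⟩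

/-- `g^{ord g}` is an atom. -/
lemma replicate_atom [Fintype G] {G₀ : Set G} {g : G} (hg : g ∈ G₀) :
    IsAtomOver G₀ (Multiset.replicate (addOrderOf g) g) := by
  have hpos : 0 < addOrderOf g := addOrderOf_pos g
  refine ⟨⟨fun x hx => ?_, ?_⟩, ?_, ?_⟩
  · rw [Multiset.eq_of_mem_replicate hx]; exact hg
  · rw [Multiset.sum_replicate]; exact addOrderOf_nsmul_eq_zero g
  · intro h
    have := congrArg Multiset.card h
    simp only [Multiset.card_replicate, Multiset.card_zero] at this
    omega
  · intro B hBle hB0 hBne hBsum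
    have hmem : ∀ x ∈ B, x = g := fun x hx =>
      Multiset.eq_of_mem_replicate (Multiset.mem_of_le hBle hx)
    have hBrep : B = Multiset.replicate B.card g := Multiset.eq_replicate_card.2 hmem
    have hcard : B.card ≤ addOrderOf g := by
      simpa using Multiset.card_le_card hBle
    have hlt : B.card < addOrderOf g := by
      rcases hcard.lt_or_eq with h | h
      · exact h
      · exact absurd (by rw [hBrep, h]) hBne
    have : B.card • g = 0 := by rwa [hBrep, Multiset.sum_replicate] at hBsum
    have hdvd : addOrderOf g ∣ B.card := addOrderOf_dvd_of_nsmul_eq_zero this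
    have hne0 : B.card ≠ 0 := fun h => hB0 (Multiset.card_eq_zero.1 h)
    exact absurd (Nat.le_of_dvd (Nat.pos_of_ne_zero hne0) hdvd) (not_le.2 hlt)

/-- Every zero-sum sequence factors into atoms. -/
lemma exists_factorization [DecidableEq G] {G₀ : Set G} :
    ∀ D : Multiset G, IsZeroSumSeq G₀ D →
      ∃ f : Multiset (Multiset G), (∀ A ∈ f, IsAtomOver G₀ A) ∧ f.sum = D := by
  intro D
  induction D using Multiset.strongInductionOn with
  | ih D IH =>
    intro hD
    by_cases hD0 : D = 0
    · exact ⟨0, by simp, by simp [hD0]⟩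
    · -- pick a minimal-cardinality nonempty zero-sum subsequence
      set S : Set ℕ := {k | ∃ B : Multiset G, B ≤ D ∧ B ≠ 0 ∧ B.sum = 0 ∧ B.card = k}
      have hSne : S.Nonempty := ⟨D.card, D, le_refl D, hD0, hD.2, rfl⟩
      obtain ⟨B, hBle, hB0, hBsum, hBcard⟩ := Nat.sInf_mem hSne
      have hBatom : IsAtomOver G₀ B := by
        refine ⟨⟨fun x hx => hD.1 x (Multiset.mem_of_le hBle hx), hBsum⟩, hB0, ?_⟩
        intro B' hB'le hB'0 hB'ne hB'sum
        have hlt : B' < B := lt_of_le_of_ne hB'le hB'ne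
        have : B'.card ∈ S := ⟨B', le_trans hB'le hBle, hB'0, hB'sum, rfl⟩
        have := Nat.sInf_le this
        have := Multiset.card_lt_card hlt
        omega
      have hsub : D - B < D := by
        have hcardlt : (D - B).card < D.card := by
          rw [Multiset.card_sub hBle]
          have hBc : 0 < B.card := Multiset.card_pos.2 hB0
          have : B.card ≤ D.card := Multiset.card_le_card hBle
          omega
        refine lt_of_le_of_ne (Multiset.sub_le_self D B) fun h => ?_
        rw [h] at hcardlt
        omega
      have hadd : B + (D - B) = D := by
        rw [add_comm]; exact tsub_add_cancel_of_le hBle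
      have hzss : IsZeroSumSeq G₀ (D - B) := by
        constructor
        · intro x hx
          exact hD.1 x (Multiset.mem_of_le (Multiset.sub_le_self D B) hx)
        · have : (D - B).sum + B.sum = D.sum := by
            rw [← Multiset.sum_add, tsub_add_cancel_of_le hBle]
          rw [hBsum, add_zero] at this
          rw [this, hD.2]
      obtain ⟨f, hf1, hf2⟩ := IH (D - B) hsub hzss
      exact ⟨B ::ₘ f, by
        intro A hA
        rcases Multiset.mem_cons.1 hA with h | h
        · rwa [h]
        · exact hf1 A h, by rw [Multiset.sum_cons, hf2, hadd]⟩

lemma lengthSet_add {G₀ : Set G} {B₁ B₂ : Multiset G} {k₁ k₂ : ℕ}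
    (h₁ : k₁ ∈ lengthSet G₀ B₁) (h₂ : k₂ ∈ lengthSet G₀ B₂) :
    k₁ + k₂ ∈ lengthSet G₀ (B₁ + B₂) := by
  obtain ⟨f₁, hc₁, ha₁, hs₁⟩ := h₁
  obtain ⟨f₂, hc₂, ha₂, hs₂⟩ := h₂
  exact ⟨f₁ + f₂, by simp [hc₁, hc₂], by
    intro A hA
    rcases Multiset.mem_add.1 hA with h | h
    exacts [ha₁ A h, ha₂ A h], by simp [hs₁, hs₂]⟩

lemma lengthSet_nsmul {G₀ : Set G} {B : Multiset G} {k : ℕ} (q : ℕ)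
    (h : k ∈ lengthSet G₀ B) : q * k ∈ lengthSet G₀ (q • B) := by
  induction q with
  | zero => exact ⟨0, by simp, by simp, by simp⟩
  | succ m ih =>
    have := lengthSet_add ih h
    rw [succ_nsmul]
    convert this using 1
    ring

/-- Extract a consecutive pair (an element of `distSet`) between two members of `L`. -/
lemma exists_dist_between' {L : Set ℕ} {a b : ℕ} (ha : a ∈ L) (hb : b ∈ L) (hab : a < b) :
    ∃ a' b', a' ∈ L ∧ b' ∈ L ∧ a ≤ a' ∧ a' < b' ∧ b' ≤ b ∧ (b' - a') ∈ distSet L := by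
  classical
  set S : Finset ℕ := (Finset.Icc a b).filter (fun c => c ∈ L) with hS
  have haS : a ∈ S := by simp [hS, ha, le_of_lt hab]
  have hbS : b ∈ S := by simp [hS, hb, le_of_lt hab]
  have hne1 : (S.filter (fun c => c < b)).Nonempty := ⟨a, by simp [haS, hab]⟩
  set a' := (S.filter (fun c => c < b)).max' hne1 with ha'
  have ha'mem : a' ∈ S.filter (fun c => c < b) := Finset.max'_mem _ hne1
  have ha'S : a' ∈ S := (Finset.mem_filter.1 ha'mem).1
  have ha'lt : a' < b := (Finset.mem_filter.1 ha'mem).2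
  have hne2 : (S.filter (fun c => a' < c)).Nonempty := ⟨b, by simp [hbS, ha'lt]⟩
  set b' := (S.filter (fun c => a' < c)).min' hne2 with hb'
  have hb'mem : b' ∈ S.filter (fun c => a' < c) := Finset.min'_mem _ hne2
  have hb'S : b' ∈ S := (Finset.mem_filter.1 hb'mem).1
  have hab' : a' < b' := (Finset.mem_filter.1 hb'mem).2
  have ha'full : (a ≤ a' ∧ a' ≤ b) ∧ a' ∈ L := by simpa [hS] using ha'S
  have hb'full : (a ≤ b' ∧ b' ≤ b) ∧ b' ∈ L := by simpa [hS] using hb'S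
  have ha'L : a' ∈ L := ha'full.2
  have hb'L : b' ∈ L := hb'full.2
  have ha'ge : a ≤ a' := ha'full.1.1
  have hb'le : b' ≤ b := hb'full.1.2
  refine ⟨a', b', ha'L, hb'L, ha'ge, hab', hb'le, a', ha'L, b', hb'L, hab', rfl, ?_⟩
  intro c hcL hc1 hc2
  have hcS : c ∈ S := by
    simp only [hS, Finset.mem_filter, Finset.mem_Icc]
    exact ⟨⟨by omega, by omega⟩, hcL⟩
  have : b' ≤ c := Finset.min'_le _ c (Finset.mem_filter.2 ⟨hcS, hc1⟩)
  omega

lemma exists_dist_between {L : Set ℕ} {a b : ℕ} (ha : a ∈ L) (hb : b ∈ L) (hab : a < b) :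
    ∃ d ∈ distSet L, 0 < d ∧ d ≤ b - a := by
  obtain ⟨a', b', _, _, h1, h2, h3, h4⟩ := exists_dist_between' ha hb hab
  exact ⟨b' - a', h4, by omega, by omega⟩

lemma mem_DeltaOf {G₀ : Set G} {B : Multiset G} (hB : B ≠ 0) {d : ℕ}
    (hd : d ∈ distSet (lengthSet G₀ B)) : d ∈ DeltaOf G₀ := by
  simp only [DeltaOf, Set.mem_iUnion]
  exact ⟨B, hB, hd⟩

/-- In a half-factorial setting, sets of lengths are singletons. -/
lemma length_unique {G₀ : Set G} (hΔ : DeltaOf G₀ = ∅) {B : Multiset G} (hB : B ≠ 0)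
    {k₁ k₂ : ℕ} (h₁ : k₁ ∈ lengthSet G₀ B) (h₂ : k₂ ∈ lengthSet G₀ B) : k₁ = k₂ := by
  by_contra hne
  rcases Nat.lt_or_ge k₁ k₂ with h | h
  · obtain ⟨d, hd, -, -⟩ := exists_dist_between h₁ h₂ h
    have := mem_DeltaOf hB hd
    rw [hΔ] at this; exact this
  · have hlt : k₂ < k₁ := by omega
    obtain ⟨d, hd, -, -⟩ := exists_dist_between h₂ h₁ hlt
    have := mem_DeltaOf hB hd
    rw [hΔ] at this; exact this

end Helpers2
section Helpers3
variable {G : Type*} [AddCommGroup G]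

lemma distSet_pos {L : Set ℕ} {d : ℕ} (hd : d ∈ distSet L) : 0 < d := by
  obtain ⟨a, -, b, -, hab, rfl, -⟩ := hd
  omega

lemma Delta_pos {G₀ : Set G} {d : ℕ} (hd : d ∈ DeltaOf G₀) : 0 < d := by
  simp only [DeltaOf, Set.mem_iUnion] at hd
  obtain ⟨B, hB, hd⟩ := hd
  exact distSet_pos hd

/-- min Δ(G₀) divides every element of Δ(G₀). -/
lemma sInf_dvd_mem_Delta {G₀ : Set G} (hnhf : (DeltaOf G₀).Nonempty)
    {d' : ℕ} (hd' : d' ∈ DeltaOf G₀) : sInf (DeltaOf G₀) ∣ d' := by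
  set d := sInf (DeltaOf G₀) with hdd
  have hdmem : d ∈ DeltaOf G₀ := Nat.sInf_mem hnhf
  have hdpos : 0 < d := Delta_pos hdmem
  simp only [DeltaOf, Set.mem_iUnion] at hdmem hd'
  obtain ⟨B₁, hB₁, a₁, ha₁, b₁, hb₁, hab₁, hsub₁, -⟩ := hdmem
  obtain ⟨B₂, hB₂, a₂, ha₂, b₂, hb₂, hab₂, hsub₂, -⟩ := hd'
  -- b₁ = a₁ + d, b₂ = a₂ + d'
  have hb₁eq : b₁ = a₁ + d := by omega
  have hb₂eq : b₂ = a₂ + d' := by omega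
  obtain ⟨q, r, hdr, hrlt⟩ : ∃ q r, d' = q * d + r ∧ r < d :=
    ⟨d' / d, d' % d, by rw [Nat.mul_comm]; exact (Nat.div_add_mod d' d).symm,
      Nat.mod_lt _ hdpos⟩
  rcases Nat.eq_zero_or_pos r with h0 | hrpos
  · exact ⟨q, by rw [hdr, h0, Nat.add_zero, Nat.mul_comm]⟩
  · exfalso
    set B := q • B₁ + B₂ with hB
    have hBne : B ≠ 0 := by
      intro h
      rw [hB] at h
      have hle : B₂ ≤ q • B₁ + B₂ := le_add_self
      rw [h] at hle
      exact hB₂ (Multiset.le_zero.1 hle)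
    have hv₁ : q * b₁ + a₂ ∈ lengthSet G₀ B := lengthSet_add (lengthSet_nsmul q hb₁) ha₂
    have hv₂ : q * a₁ + b₂ ∈ lengthSet G₀ B := lengthSet_add (lengthSet_nsmul q ha₁) hb₂
    have hmul : q * b₁ = q * a₁ + q * d := by rw [hb₁eq]; ring
    have hlt : q * b₁ + a₂ < q * a₁ + b₂ := by omega
    obtain ⟨e, he, hepos, hele⟩ := exists_dist_between hv₁ hv₂ hlt
    have heD : e ∈ DeltaOf G₀ := mem_DeltaOf hBne he
    have : d ≤ e := Nat.sInf_le heD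
    have : e ≤ r := by
      have h1 : q * a₁ + b₂ - (q * b₁ + a₂) = r := by omega
      omega
    omega

/-- min Δ(G₀) divides the difference of any two lengths of the same sequence. -/
lemma sInf_dvd_length_diff {G₀ : Set G} (hnhf : (DeltaOf G₀).Nonempty)
    {B : Multiset G} (hB : B ≠ 0) {a b : ℕ}
    (ha : a ∈ lengthSet G₀ B) (hb : b ∈ lengthSet G₀ B) (hab : a ≤ b) :
    sInf (DeltaOf G₀) ∣ b - a := by
  set d := sInf (DeltaOf G₀) with hdd
  -- strong induction on b - a
  have key : ∀ n : ℕ, ∀ a b : ℕ, a ∈ lengthSet G₀ B → b ∈ lengthSet G₀ B →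
      a ≤ b → b - a ≤ n → d ∣ b - a := by
    intro n
    induction n with
    | zero => intro a b _ _ _ h; have : b - a = 0 := by omega
              rw [this]; exact dvd_zero d
    | succ m ih =>
      intro a b ha hb hab hle
      rcases Nat.eq_or_lt_of_le hab with heq | hlt
      · rw [heq]; simp
      · obtain ⟨a', b', ha'L, hb'L, h1, h2, h3, h4⟩ := exists_dist_between' ha hb hlt
        have heD : (b' - a') ∈ DeltaOf G₀ := mem_DeltaOf hB h4
        have hde : d ∣ b' - a' := sInf_dvd_mem_Delta hnhf heD
        have hd1 : d ∣ a' - a := ih a a' ha ha'L h1 (by omega)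
        have hd2 : d ∣ b - b' := ih b' b hb'L hb h3 (by omega)
        have heq2 : b - a = (a' - a) + (b' - a') + (b - b') := by omega
        rw [heq2]
        exact dvd_add (dvd_add hd1 hde) hd2
  exact key (b - a) a b ha hb hab le_rfl

end Helpers3
section Helpers4
variable {G : Type*} [AddCommGroup G]

/-- `crossNumber` as an additive monoid hom. -/
noncomputable def crossHom (G : Type*) [AddCommGroup G] : Multiset G →+ ℚ where
  toFun := crossNumber
  map_zero' := crossNumber_zero
  map_add' := crossNumber_add

/-- `Multiset.card` as an additive monoid hom. -/
def cardHom' (α : Type*) : Multiset α →+ ℕ where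
  toFun := Multiset.card
  map_zero' := rfl
  map_add' := Multiset.card_add

/-- `Multiset.sum` as an additive monoid hom. -/
def sumHom' (α : Type*) [AddCommMonoid α] : Multiset α →+ α where
  toFun := Multiset.sum
  map_zero' := rfl
  map_add' := Multiset.sum_add

lemma card_finset_sum {α β : Type*} (s : Finset β) (f : β → Multiset α) :
    (∑ b ∈ s, f b).card = ∑ b ∈ s, (f b).card :=
  map_sum (cardHom' α) f s

lemma sum_finset_sum {α β : Type*} [AddCommMonoid α] (s : Finset β) (f : β → Multiset α) :
    (∑ b ∈ s, f b).sum = ∑ b ∈ s, (f b).sum :=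
  map_sum (sumHom' α) f s

lemma crossNumber_finset_sum {β : Type*} (s : Finset β) (f : β → Multiset G) :
    crossNumber (∑ b ∈ s, f b) = ∑ b ∈ s, crossNumber (f b) :=
  map_sum (crossHom G) f s

/-- Skula–Zaks (easy direction): over a half-factorial set every atom has
cross number `1`. -/
lemma atom_crossNumber_one [Fintype G] [DecidableEq G] {G₀' : Set G}
    (hΔ : DeltaOf G₀' = ∅) {W : Multiset G} (hW : IsAtomOver G₀' W) :
    crossNumber W = 1 := by
  set N := Fintype.card G with hN
  have hNpos : 0 < N := Fintype.card_pos
  have hodvd : ∀ h : G, addOrderOf h ∣ N := fun h => addOrderOf_dvd_card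
  -- decomposition of W
  have hdec : ∑ h ∈ W.toFinset, Multiset.replicate (W.count h) h = W := by
    have := Multiset.toFinset_sum_count_nsmul_eq W
    simpa [Multiset.nsmul_singleton] using this
  -- the two factorizations of N • W
  have hf1 : N ∈ lengthSet G₀' (N • W) := by
    refine ⟨Multiset.replicate N W, by simp, ?_, by simp [Multiset.sum_replicate]⟩
    intro A hA
    rw [Multiset.eq_of_mem_replicate hA]
    exact hW
  set k : G → ℕ := fun h => N * W.count h / addOrderOf h with hk
  have hkdvd : ∀ h : G, addOrderOf h * k h = N * W.count h := fun h =>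
    Nat.mul_div_cancel' (Dvd.dvd.mul_right (hodvd h) _) 
  set f2 : Multiset (Multiset G) :=
    ∑ h ∈ W.toFinset, Multiset.replicate (k h) (Multiset.replicate (addOrderOf h) h) with hf2def
  set M : ℕ := ∑ h ∈ W.toFinset, k h with hM
  have hcard : f2.card = M := by
    rw [hf2def, hM, card_finset_sum]
    simp
  have hsum : f2.sum = N • W := by
    rw [hf2def, sum_finset_sum]
    have : ∀ h ∈ W.toFinset,
        (Multiset.replicate (k h) (Multiset.replicate (addOrderOf h) h)).sum
          = Multiset.replicate (N * W.count h) h := by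
      intro h hh
      rw [Multiset.sum_replicate, nsmul_replicate', ← hkdvd h, Nat.mul_comm]
    rw [Finset.sum_congr rfl this]
    calc ∑ h ∈ W.toFinset, Multiset.replicate (N * W.count h) h
        = ∑ h ∈ W.toFinset, N • Multiset.replicate (W.count h) h := by
          refine Finset.sum_congr rfl fun h _ => ?_
          rw [nsmul_replicate']
      _ = N • ∑ h ∈ W.toFinset, Multiset.replicate (W.count h) h := by
          rw [Finset.smul_sum]
      _ = N • W := by rw [hdec]
  have hf2 : M ∈ lengthSet G₀' (N • W) := by
    refine ⟨f2, hcard, ?_, hsum⟩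
    intro A hA
    rw [hf2def] at hA
    have : ∃ h ∈ W.toFinset, A ∈ Multiset.replicate (k h) (Multiset.replicate (addOrderOf h) h) := by
      classical
      exact Multiset.mem_sum.1 hA
    obtain ⟨h, hh, hmem⟩ := this
    rw [Multiset.eq_of_mem_replicate hmem]
    have hhG : h ∈ G₀' := hW.1.1 h (Multiset.mem_toFinset.1 hh)
    exact replicate_atom hhG
  have hW0 : W ≠ 0 := hW.2.1
  have hNW0 : N • W ≠ 0 := by
    intro h
    have := congrArg Multiset.card h
    rw [Multiset.card_nsmul] at this
    simp only [Multiset.card_zero] at this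
    have hWc : Multiset.card W ≠ 0 := fun hc => hW0 (Multiset.card_eq_zero.1 hc)
    rcases Nat.mul_eq_zero.1 this with h' | h'
    · omega
    · exact hWc h'
  have hMN : M = N := length_unique hΔ hNW0 hf2 hf1
  -- compute cross number
  have hcross : crossNumber W = ∑ h ∈ W.toFinset, (W.count h : ℚ) * ((addOrderOf h : ℚ))⁻¹ := by
    conv_lhs => rw [← hdec]
    rw [crossNumber_finset_sum]
    refine Finset.sum_congr rfl fun h _ => ?_
    rw [crossNumber_replicate]
  have hmain : (N : ℚ) * crossNumber W = (M : ℚ) := by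
    rw [hcross, Finset.mul_sum, hM]
    rw [Nat.cast_sum]
    refine Finset.sum_congr rfl fun h _ => ?_
    have hopos : (0:ℚ) < (addOrderOf h : ℚ) := by
      exact_mod_cast addOrderOf_pos h
    have : (k h : ℚ) * (addOrderOf h : ℚ) = (N : ℚ) * (W.count h : ℚ) := by
      rw [← Nat.cast_mul, ← Nat.cast_mul, Nat.mul_comm (k h), hkdvd h]
    field_simp
    linarith [this]
  rw [hMN] at hmain
  have hN0 : (N : ℚ) ≠ 0 := by exact_mod_cast hNpos.ne'
  have : (N : ℚ) * crossNumber W = (N : ℚ) * 1 := by rw [hmain, mul_one]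
  exact mul_left_cancel₀ hN0 this

end Helpers4
section Helpers5
variable {G : Type*} [AddCommGroup G]

lemma exists_t_q (a u n : ℕ) (hpos : 0 < n) (hgcd : Nat.gcd u n = 1) :
    ∃ t q : ℕ, a + t * u = q * n := by
  haveI : NeZero n := ⟨hpos.ne'⟩
  set w : (ZMod n)ˣ := ZMod.unitOfCoprime u hgcd with hw
  set x : ZMod n := (-(a : ZMod n)) * ((w⁻¹ : (ZMod n)ˣ) : ZMod n) with hx
  have hdvd : n ∣ a + x.val * u := by
    rw [← ZMod.natCast_eq_zero_iff]
    push_cast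
    rw [ZMod.natCast_zmod_val, hx]
    have hwu : ((w : (ZMod n)ˣ) : ZMod n) = (u : ZMod n) := ZMod.coe_unitOfCoprime u hgcd
    rw [← hwu, mul_assoc]
    have : ((w⁻¹ : (ZMod n)ˣ) : ZMod n) * ((w : (ZMod n)ˣ) : ZMod n) = 1 := by
      rw [← Units.val_mul, inv_mul_cancel, Units.val_one]
    rw [this, mul_one]
    ring
  exact ⟨x.val, (a + x.val * u) / n, ((Nat.div_mul_cancel hdvd).symm)⟩

lemma mem_of_mem_nsmul {α : Type*} {t : ℕ} {S : Multiset α} {x : α}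
    (h : x ∈ t • S) : x ∈ S := by
  induction t with
  | zero => simp at h
  | succ m ih =>
    rw [succ_nsmul, Multiset.mem_add] at h
    rcases h with h | h
    exacts [ih h, h]

end Helpers5

theorem cross_numbers_integral_and_minDelta_divides
    (G : Type*) [AddCommGroup G] [Fintype G] [DecidableEq G]
    (G₀ : Set G)
    (hnhf : (DeltaOf G₀).Nonempty)
    (hcond : ∃ g ∈ G₀, DeltaOf (G₀ \ {g}) = ∅ ∧
      ∃ U : Multiset G, IsAtomOver G₀ U ∧ crossNumber U = 1 ∧
        Nat.gcd (Multiset.count g U) (addOrderOf g) = 1) :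
    ∀ A : Multiset G, IsAtomOver G₀ A →
      ∃ m : ℕ, 0 < m ∧ crossNumber A = (m : ℚ) ∧ sInf (DeltaOf G₀) ∣ m - 1 := by
  obtain ⟨g, hgG₀, hΔg, U, hU, hkU, hgcd⟩ := hcond
  intro A hA
  set n := addOrderOf g with hn
  have hnpos : 0 < n := addOrderOf_pos g
  set a := Multiset.count g A with ha
  set u := Multiset.count g U with hu
  obtain ⟨t, q, htq⟩ := exists_t_q a u n hnpos hgcd
  set A' := A.filter (fun x => ¬ x = g) with hA'
  set U' := U.filter (fun x => ¬ x = g) with hU'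
  have hAsplit : Multiset.replicate a g + A' = A := by
    rw [ha, hA', ← Multiset.filter_eq' A g]
    exact Multiset.filter_add_not _ A
  have hUsplit : Multiset.replicate u g + U' = U := by
    rw [hu, hU', ← Multiset.filter_eq' U g]
    exact Multiset.filter_add_not _ U
  set D := A' + t • U' with hD
  set C := A + t • U with hC
  -- C = replicate (q*n) g + D
  have hCeq : C = Multiset.replicate (q * n) g + D := by
    rw [hC, hD, ← hAsplit, ← hUsplit, smul_add, nsmul_replicate', ← htq,
      Multiset.replicate_add]
    abel
  -- D is a zero-sum sequence over G₀ \ {g}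
  have hDmem : ∀ x ∈ D, x ∈ G₀ \ {g} := by
    intro x hx
    rw [hD, Multiset.mem_add] at hx
    have hxAU : x ∈ A' ∨ x ∈ U' := by
      rcases hx with h | h
      · exact Or.inl h
      · exact Or.inr (mem_of_mem_nsmul h)
    have : (x ∈ A ∨ x ∈ U) ∧ ¬ x = g := by
      rcases hxAU with h | h
      · rw [hA', Multiset.mem_filter] at h
        exact ⟨Or.inl h.1, h.2⟩
      · rw [hU', Multiset.mem_filter] at h
        exact ⟨Or.inr h.1, h.2⟩
    refine ⟨?_, this.2⟩
    rcases this.1 with h | h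
    · exact hA.1.1 x h
    · exact hU.1.1 x h
  have hCsum : C.sum = 0 := by
    rw [hC, Multiset.sum_add, sum_nsmul_multiset, hA.1.2, hU.1.2]
    simp
  have hDsum : D.sum = 0 := by
    have hng : n • g = 0 := addOrderOf_nsmul_eq_zero g
    have h1 : (Multiset.replicate (q * n) g).sum = 0 := by
      rw [Multiset.sum_replicate, mul_comm, mul_nsmul, hng, smul_zero]
    have := hCsum
    rw [hCeq, Multiset.sum_add, h1, zero_add] at this
    exact this
  have hDzs : IsZeroSumSeq (G₀ \ {g}) D := ⟨hDmem, hDsum⟩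
  obtain ⟨f', hf'atoms, hf'sum⟩ := exists_factorization D hDzs
  set ℓ := f'.card with hℓ
  -- lengths of C
  have hC0 : C ≠ 0 := by
    intro h
    have : A ≤ C := by rw [hC]; exact le_add_self.trans (le_of_eq (add_comm _ _))
    rw [h] at this
    exact hA.2.1 (Multiset.le_zero.1 this)
  have hlen1 : 1 + t ∈ lengthSet G₀ C := by
    refine ⟨A ::ₘ Multiset.replicate t U, by simp [Nat.add_comm], ?_, ?_⟩
    · intro B hB
      rcases Multiset.mem_cons.1 hB with h | h
      · rwa [h]
      · rw [Multiset.eq_of_mem_replicate h]; exact hU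
    · rw [Multiset.sum_cons, Multiset.sum_replicate, hC]
  have hlen2 : q + ℓ ∈ lengthSet G₀ C := by
    refine ⟨Multiset.replicate q (Multiset.replicate n g) + f', by simp [hℓ], ?_, ?_⟩
    · intro B hB
      rcases Multiset.mem_add.1 hB with h | h
      · rw [Multiset.eq_of_mem_replicate h]
        exact replicate_atom hgG₀
      · exact (hf'atoms B h).mono Set.diff_subset
    · rw [Multiset.sum_add, Multiset.sum_replicate, nsmul_replicate', hf'sum, hCeq]
  -- cross numbers
  have hkC1 : crossNumber C = crossNumber A + t := by
    rw [hC, crossNumber_add, crossNumber_nsmul, hkU, mul_one]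
  have hkD : crossNumber D = (ℓ : ℚ) := by
    rw [← hf'sum, crossNumber_multiset_sum]
    have hall1 : ∀ x ∈ f'.map crossNumber, x = 1 := by
      intro x hx
      obtain ⟨B, hB, rfl⟩ := Multiset.mem_map.1 hx
      exact atom_crossNumber_one hΔg (hf'atoms B hB)
    rw [Multiset.eq_replicate_card.2 hall1, Multiset.sum_replicate, Multiset.card_map]
    simp [hℓ]
  have hkC2 : crossNumber C = (q : ℚ) + ℓ := by
    rw [hCeq, crossNumber_add, crossNumber_replicate, hkD, ← hn]
    have hn0 : (n : ℚ) ≠ 0 := by exact_mod_cast hnpos.ne'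
    push_cast
    field_simp
  have hkA : crossNumber A = (q : ℚ) + ℓ - t := by
    rw [← hkC2, hkC1]; ring
  have hApos : 0 < crossNumber A := crossNumber_pos hA.2.1
  have htlt : t < q + ℓ := by
    by_contra hcon
    push_neg at hcon
    have : ((q + ℓ : ℕ) : ℚ) ≤ (t : ℚ) := by exact_mod_cast hcon
    push_cast at this
    rw [hkA] at hApos
    linarith
  refine ⟨q + ℓ - t, by omega, ?_, ?_⟩
  · rw [hkA]
    have : ((q + ℓ - t : ℕ) : ℚ) = ((q + ℓ : ℕ) : ℚ) - t := by
      rw [Nat.cast_sub (by omega)]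
    rw [this]
    push_cast
    ring
  · have hle : 1 + t ≤ q + ℓ := by omega
    have hdvd := sInf_dvd_length_diff hnhf hC0 hlen1 hlen2 hle
    have : q + ℓ - (1 + t) = (q + ℓ - t) - 1 := by omega
    rwa [this] at hdvd
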